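/- arXiv:1904.04218 — 5 statements merged into one kernel-verified Lean document; each statement's English description precedes it below -/
import Mathlib

section
/- If G is a dm×dm real positive semidefinite symmetric matrix with rank(G) ≤ d, whose m diagonal d×d blocks are all equal to the d×d identity matrix, and whose m−1 superdiagonal blocks G_{i,i+1} all lie in SO(d), then there exist rotation matrices R_1,…,R_m ∈ SO(d) such that the (i,j)-th d×d block of G equals R_iᵀ R_j for all i,j ∈ [m]. -/
open Matrix

theorem stmt0 (d m : ℕ) (hd : 1 ≤ d) (hm : 1 ≤ m)
    (G : Matrix (Fin m × Fin d) (Fin m × Fin d) ℝ)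
    (hpsd : G.PosSemidef)
    (hrank : G.rank ≤ d)
    (hdiag : ∀ i : Fin m, (fun p q : Fin d => G (i, p) (i, q)) = (1 : Matrix (Fin d) (Fin d) ℝ))
    (hsup : ∀ i : Fin m, ∀ h : (i : ℕ) + 1 < m,
      (Matrix.of fun p q : Fin d => G (i, p) (⟨(i : ℕ) + 1, h⟩, q))ᵀ *
        (Matrix.of fun p q : Fin d => G (i, p) (⟨(i : ℕ) + 1, h⟩, q)) = 1 ∧
      (Matrix.of fun p q : Fin d => G (i, p) (⟨(i : ℕ) + 1, h⟩, q)).det = 1) :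
    ∃ R : Fin m → Matrix (Fin d) (Fin d) ℝ,
      (∀ i, (R i)ᵀ * R i = 1 ∧ (R i).det = 1) ∧
      (∀ i j : Fin m, ∀ p q : Fin d, G (i, p) (j, q) = ((R i)ᵀ * R j) p q) := by
  obtain ⟨B, hB⟩ : ∃ B : Matrix (Fin m × Fin d) (Fin m × Fin d) ℝ, G = Bᴴ * B := by
    classical
    open scoped MatrixOrder in
    obtain ⟨X, hX, -, hXX⟩ := CFC.exists_sqrt_of_isSelfAdjoint_of_quasispectrumRestricts
      hpsd.isHermitian (QuasispectrumRestricts.nnreal_of_nonneg hpsd.nonneg)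
    exact ⟨X, by rw [← hXX]; nth_rewrite 1 [← hX.star_eq]; rfl⟩
  set i0 : Fin m := ⟨0, hm⟩ with hi0
  set Bl : Fin m → Matrix (Fin m × Fin d) (Fin d) ℝ :=
    fun i => Matrix.of fun k q => B k (i, q) with hBl
  -- block formula
  have hblock : ∀ i j : Fin m, (Bl i)ᵀ * Bl j = Matrix.of fun p q => G (i, p) (j, q) := by
    intro i j
    ext p q
    simp [hB, Matrix.mul_apply, hBl, Matrix.conjTranspose_apply, Matrix.transpose_apply]
  have hBlI : ∀ i : Fin m, (Bl i)ᵀ * Bl i = 1 := by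
    intro i
    rw [hblock]
    ext p q
    simpa using congrFun (congrFun (hdiag i) p) q
  -- W = range of (Bl i0).mulVecLin, V = range of B.mulVecLin
  set W := LinearMap.range (Bl i0).mulVecLin with hW
  set V := LinearMap.range B.mulVecLin with hV
  have hWV : W ≤ V := by
    rintro v ⟨x, rfl⟩
    refine ⟨fun kq => if kq.1 = i0 then x kq.2 else 0, ?_⟩
    ext k
    simp only [Matrix.mulVecLin_apply, Matrix.mulVec, dotProduct]
    rw [Fintype.sum_prod_type]
    simp [Finset.sum_ite_eq', mul_ite, hBl]
  have hWrank : Module.finrank ℝ W = d := by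
    have hinj : Function.Injective (Bl i0).mulVecLin := by
      intro x y hxy
      have h2 := congrArg (fun v => (Bl i0)ᵀ.mulVec v) hxy
      simpa [Matrix.mulVec_mulVec, hBlI i0] using h2
    rw [hW, LinearMap.finrank_range_of_inj hinj]
    simp
  have hVfin : Module.finrank ℝ V ≤ Module.finrank ℝ W := by
    have h1 : B.rank = G.rank := by rw [hB, Matrix.rank_conjTranspose_mul_self]
    have h2 : Module.finrank ℝ V = B.rank := rfl
    rw [hWrank, h2, h1]
    exact hrank
  have hWeq : W = V := Submodule.eq_of_le_of_finrank_le hWV hVfin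
  -- projection fixes W
  have hfix : ∀ v ∈ W, (Bl i0 * (Bl i0)ᵀ).mulVec v = v := by
    rintro v ⟨x, rfl⟩
    simp only [Matrix.mulVecLin_apply, Matrix.mulVec_mulVec]
    rw [Matrix.mul_assoc, hBlI i0, Matrix.mul_one]
  have hcol : ∀ (j : Fin m) (q : Fin d),
      (Bl i0 * (Bl i0)ᵀ).mulVec (fun k => B k (j, q)) = fun k => B k (j, q) := by
    intro j q
    apply hfix
    rw [hWeq]
    refine ⟨Pi.single (j, q) 1, ?_⟩
    ext k
    simp [Matrix.mulVecLin_apply, Matrix.mulVec, dotProduct, Pi.single_apply]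
  have hproj : ∀ j : Fin m, Bl i0 * (Bl i0)ᵀ * Bl j = Bl j := by
    intro j
    ext k q
    have h3 := congrFun (hcol j q) k
    simpa [Matrix.mul_apply, Matrix.mulVec, dotProduct, hBl] using h3
  -- define R
  set R : Fin m → Matrix (Fin d) (Fin d) ℝ := fun i => (Bl i0)ᵀ * Bl i with hR
  have hRR : ∀ i j : Fin m, (R i)ᵀ * R j = Matrix.of fun p q => G (i, p) (j, q) := by
    intro i j
    have : (R i)ᵀ * R j = (Bl i)ᵀ * (Bl i0 * (Bl i0)ᵀ * Bl j) := by
      rw [hR]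
      simp only [Matrix.transpose_mul, Matrix.transpose_transpose]
      rw [Matrix.mul_assoc, Matrix.mul_assoc]
    rw [this, hproj, hblock]
  have hRI : ∀ i : Fin m, (R i)ᵀ * R i = 1 := by
    intro i
    rw [hRR]
    ext p q
    simpa using congrFun (congrFun (hdiag i) p) q
  have hdet2 : ∀ i : Fin m, (R i).det * (R i).det = 1 := by
    intro i
    have := congrArg Matrix.det (hRI i)
    simpa [Matrix.det_mul, Matrix.det_transpose] using this
  have hdet : ∀ n : ℕ, ∀ h : n < m, (R ⟨n, h⟩).det = 1 := by
    intro n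
    induction n with
    | zero =>
      intro h
      have : R ⟨0, h⟩ = (Bl i0)ᵀ * Bl i0 := rfl
      rw [this, hBlI i0]
      simp
    | succ n ih =>
      intro h
      have hn : n < m := Nat.lt_of_succ_lt h
      have hsub := (hsup ⟨n, hn⟩ h).2
      have hb : (Matrix.of fun p q : Fin d => G (⟨n, hn⟩, p) (⟨n + 1, h⟩, q)) =
          (R ⟨n, hn⟩)ᵀ * R ⟨n + 1, h⟩ := (hRR ⟨n, hn⟩ ⟨n + 1, h⟩).symm
      rw [hb, Matrix.det_mul, Matrix.det_transpose, ih hn, one_mul] at hsub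
      exact hsub
  refine ⟨R, fun i => ⟨hRI i, ?_⟩, fun i j p q => ?_⟩
  · have := hdet i.1 i.2
    simpa using this
  · have := congrFun (congrFun (hRR i j) p) q
    simp only [Matrix.of_apply] at this
    exact this.symm
end

section
/- Let A be an n×n real symmetric matrix with spectral decomposition A = Σ_{i=1}^n λ_i u_i u_iᵀ, where λ_1 ≥ ⋯ ≥ λ_n and (u_i) is an orthonormal eigenbasis. Then B = Σ_{i=1}^d max(λ_i, 0) u_i u_iᵀ minimizes ‖X − A‖_F over all symmetric positive semidefinite X with rank(X) ≤ d. -/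
open Matrix Finset

noncomputable def frobNorm {n : ℕ} (A : Matrix (Fin n) (Fin n) ℝ) : ℝ :=
  Real.sqrt (∑ i, ∑ j, (A i j) ^ 2)

noncomputable def frob2 {n : ℕ} (M : Matrix (Fin n) (Fin n) ℝ) : ℝ :=
  ∑ i, ∑ j, (M i j) ^ 2

lemma frob2_eq_trace {n : ℕ} (M : Matrix (Fin n) (Fin n) ℝ) :
    frob2 M = Matrix.trace (M * Mᵀ) := by
  simp [frob2, Matrix.trace, Matrix.mul_apply, Matrix.diag, sq]

lemma frob2_mul_orth {n : ℕ} (M W : Matrix (Fin n) (Fin n) ℝ)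
    (hW : W * Wᵀ = 1) : frob2 (M * W) = frob2 M := by
  rw [frob2_eq_trace, frob2_eq_trace, Matrix.transpose_mul, Matrix.mul_assoc,
    ← Matrix.mul_assoc W, hW, Matrix.one_mul]

lemma frob2_orth_mul {n : ℕ} (M W : Matrix (Fin n) (Fin n) ℝ)
    (hW : Wᵀ * W = 1) : frob2 (W * M) = frob2 M := by
  rw [frob2_eq_trace, frob2_eq_trace, Matrix.transpose_mul,
    show W * M * (Mᵀ * Wᵀ) = W * (M * Mᵀ) * Wᵀ by simp [Matrix.mul_assoc],
    Matrix.trace_mul_cycle, ← Matrix.mul_assoc, hW, Matrix.one_mul]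

lemma frob2_conj {n : ℕ} (M Q : Matrix (Fin n) (Fin n) ℝ)
    (h1 : Q * Qᵀ = 1) (_h2 : Qᵀ * Q = 1) : frob2 (Qᵀ * M * Q) = frob2 M := by
  rw [frob2_mul_orth _ _ h1, frob2_orth_mul _ _ (by rw [Matrix.transpose_transpose, h1])]

lemma frob2_nonneg {n : ℕ} (M : Matrix (Fin n) (Fin n) ℝ) : 0 ≤ frob2 M :=
  Finset.sum_nonneg fun _ _ => Finset.sum_nonneg fun _ _ => sq_nonneg _

lemma frob2_diagonal {n : ℕ} (f : Fin n → ℝ) :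
    frob2 (Matrix.diagonal f) = ∑ i, (f i) ^ 2 := by
  unfold frob2
  congr 1; ext i
  rw [Finset.sum_eq_single i]
  · simp
  · intro j _ hj; simp [Matrix.diagonal_apply_ne' _ hj]
  · simp

lemma card_filter_lt' {n d : ℕ} (hdn : d ≤ n) :
    (Finset.univ.filter (fun i : Fin n => (i : ℕ) < d)).card = d := by
  rw [← Finset.card_range d]
  apply Finset.card_bij (fun (i : Fin n) _ => (i : ℕ))
  · intro a ha; simp at ha ⊢; exact ha
  · intro a ha b hb h; exact Fin.val_injective h
  · intro b hb; simp at hb; exact ⟨⟨b, lt_of_lt_of_le hb hdn⟩, by simp [hb], rfl⟩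

lemma card_filter_ge {n d : ℕ} (hdn : d ≤ n) :
    (Finset.univ.filter (fun i : Fin n => d ≤ (i : ℕ))).card = n - d := by
  have h : (Finset.univ.filter (fun i : Fin n => d ≤ (i : ℕ))) =
      (Finset.univ.filter (fun i : Fin n => (i : ℕ) < d))ᶜ := by
    ext i; simp [not_lt]
  rw [h, Finset.card_compl, card_filter_lt' hdn, Fintype.card_fin]

lemma rearr {n d : ℕ} (hdn : d ≤ n) (m q : Fin n → ℝ)
    (hm0 : ∀ i, 0 ≤ m i) (hmono : ∀ i j : Fin n, i ≤ j → m j ≤ m i)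
    (hq0 : ∀ i, 0 ≤ q i) (hq1 : ∀ i, q i ≤ 1)
    (hqs : (n : ℝ) - d ≤ ∑ i, q i) :
    ∑ i ∈ Finset.univ.filter (fun i : Fin n => d ≤ (i : ℕ)), m i ≤ ∑ i, m i * q i := by
  by_cases hnd : n ≤ d
  · have : (Finset.univ.filter (fun i : Fin n => d ≤ (i : ℕ))) = ∅ := by
      apply Finset.filter_false_of_mem
      intro i _
      have := i.2
      omega
    rw [this, Finset.sum_empty]
    exact Finset.sum_nonneg fun i _ => mul_nonneg (hm0 i) (hq0 i)
  · push_neg at hnd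
    set i₀ : Fin n := ⟨d, hnd⟩ with hi₀
    set t := m i₀ with ht
    set S := Finset.univ.filter (fun i : Fin n => d ≤ (i : ℕ)) with hS
    set Sc := Finset.univ.filter (fun i : Fin n => (i : ℕ) < d) with hSc
    have hsplit : ∑ i, m i * q i = (∑ i ∈ S, m i * q i) + ∑ i ∈ Sc, m i * q i := by
      rw [hS, hSc]
      rw [← Finset.sum_filter_add_sum_filter_not Finset.univ (fun i : Fin n => d ≤ (i : ℕ))]
      congr 1
      apply Finset.sum_congr _ (fun _ _ => rfl)
      ext i; simp [not_le]
    have h1 : ∑ i ∈ S, m i * (1 - q i) ≤ t * ∑ i ∈ S, (1 - q i) := by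
      rw [Finset.mul_sum]
      apply Finset.sum_le_sum
      intro i hi
      have hid : d ≤ (i : ℕ) := by simpa [hS] using hi
      have : m i ≤ t := hmono i₀ i (by simp [hi₀, Fin.le_def, hid])
      exact mul_le_mul_of_nonneg_right this (by linarith [hq1 i]) |>.trans_eq rfl
    have h2 : t * ∑ i ∈ Sc, q i ≤ ∑ i ∈ Sc, m i * q i := by
      rw [Finset.mul_sum]
      apply Finset.sum_le_sum
      intro i hi
      have hid : (i : ℕ) < d := by simpa [hSc] using hi
      have : t ≤ m i := hmono i i₀ (by simp [hi₀, Fin.le_def]; omega)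
      exact mul_le_mul_of_nonneg_right this (hq0 i)
    have ht0 : 0 ≤ t := hm0 i₀
    have hcardS : (S.card : ℝ) = (n : ℝ) - d := by
      rw [hS, card_filter_ge hdn]; push_cast [Nat.cast_sub hdn]; ring
    have hqsplit : ∑ i, q i = (∑ i ∈ S, q i) + ∑ i ∈ Sc, q i := by
      rw [hS, hSc,
        ← Finset.sum_filter_add_sum_filter_not Finset.univ (fun i : Fin n => d ≤ (i : ℕ))]
      congr 1
      apply Finset.sum_congr _ (fun _ _ => rfl)
      ext i; simp [not_le]
    have h3 : ∑ i ∈ S, (1 - q i) ≤ ∑ i ∈ Sc, q i := by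
      rw [Finset.sum_sub_distrib, Finset.sum_const, nsmul_eq_mul, mul_one, hcardS]
      linarith [hqsplit ▸ hqs]
    have h4 : ∑ i ∈ S, m i - ∑ i ∈ S, m i * q i = ∑ i ∈ S, m i * (1 - q i) := by
      rw [← Finset.sum_sub_distrib]; congr 1; ext i; ring
    have h5 : ∑ i ∈ S, m i * (1 - q i) ≤ ∑ i ∈ Sc, m i * q i :=
      le_trans h1 (le_trans (by nlinarith) h2)
    rw [hsplit]
    linarith

lemma star_eq_transpose_real {n : ℕ} (M : Matrix (Fin n) (Fin n) ℝ) : star M = Mᵀ := by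
  rw [Matrix.star_eq_conjTranspose]; ext i j; simp [Matrix.conjTranspose_apply]

lemma key {n d : ℕ} (hdn : d ≤ n) (μ : Fin n → ℝ) (hμ0 : ∀ i, 0 ≤ μ i)
    (hmono : ∀ i j : Fin n, i ≤ j → μ j ≤ μ i)
    (Y : Matrix (Fin n) (Fin n) ℝ) (hpsd : Y.PosSemidef) (hrank : Y.rank ≤ d) :
    ∑ i ∈ Finset.univ.filter (fun i : Fin n => d ≤ (i : ℕ)), (μ i) ^ 2
      ≤ frob2 (Y - Matrix.diagonal μ) := by
  have hY : Y.IsHermitian := hpsd.1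
  set W : Matrix (Fin n) (Fin n) ℝ := (hY.eigenvectorUnitary : Matrix (Fin n) (Fin n) ℝ)
    with hWdef
  set e : Fin n → ℝ := hY.eigenvalues with hedef
  have h1 : Wᵀ * W = 1 := by
    rw [← star_eq_transpose_real]; exact hY.eigenvectorUnitary.2.1
  have h2 : W * Wᵀ = 1 := by
    rw [← star_eq_transpose_real]; exact hY.eigenvectorUnitary.2.2
  have hspec : Y = W * Matrix.diagonal e * Wᵀ := by
    have h := hY.spectral_theorem
    rw [← star_eq_transpose_real]
    have hde : Matrix.diagonal (RCLike.ofReal ∘ e) = Matrix.diagonal e := by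
      congr 1
    rw [← hde]
    exact h
  have hYW : Y * W = W * Matrix.diagonal e := by
    rw [hspec, Matrix.mul_assoc, Matrix.mul_assoc, h1, Matrix.mul_one]
  have hMW : ∀ i j, ((Y - Matrix.diagonal μ) * W) i j = (e j - μ i) * W i j := by
    intro i j
    rw [Matrix.sub_mul, Matrix.sub_apply, hYW]
    rw [Matrix.mul_apply, Matrix.mul_apply]
    rw [Finset.sum_eq_single j (fun k _ hk => by simp [Matrix.diagonal_apply_ne _ hk]) (by simp)]
    rw [Finset.sum_eq_single i (fun k _ hk => by simp [Matrix.diagonal_apply_ne' _ hk]) (by simp)]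
    simp [Matrix.diagonal_apply_eq]
    ring
  have hfr : frob2 (Y - Matrix.diagonal μ) = ∑ i, ∑ j, ((e j - μ i) * W i j) ^ 2 := by
    rw [← frob2_mul_orth (Y - Matrix.diagonal μ) W h2]
    unfold frob2
    exact Finset.sum_congr rfl fun i _ => Finset.sum_congr rfl fun j _ => by rw [hMW]
  set S : Finset (Fin n) := Finset.univ.filter (fun j => e j = 0) with hSdef
  set q : Fin n → ℝ := fun i => ∑ j ∈ S, (W i j) ^ 2 with hqdef
  have hstep : ∑ i, (μ i) ^ 2 * q i ≤ frob2 (Y - Matrix.diagonal μ) := by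
    rw [hfr]
    apply Finset.sum_le_sum
    intro i _
    rw [hqdef, Finset.mul_sum]
    calc ∑ j ∈ S, (μ i) ^ 2 * (W i j) ^ 2
        = ∑ j ∈ S, ((e j - μ i) * W i j) ^ 2 := by
          apply Finset.sum_congr rfl
          intro j hj
          have : e j = 0 := by simpa [hSdef] using hj
          rw [this]; ring
      _ ≤ ∑ j, ((e j - μ i) * W i j) ^ 2 :=
          Finset.sum_le_sum_of_subset_of_nonneg (Finset.filter_subset _ _)
            (fun j _ _ => sq_nonneg _)
  have hrow : ∀ i, ∑ j, (W i j) ^ 2 = 1 := by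
    intro i
    have := congrArg (fun M => M i i) h2
    simpa [Matrix.mul_apply, Matrix.one_apply, sq] using this
  have hcol : ∀ j, ∑ i, (W i j) ^ 2 = 1 := by
    intro j
    have := congrArg (fun M => M j j) h1
    simpa [Matrix.mul_apply, Matrix.one_apply, sq] using this
  have hq0 : ∀ i, 0 ≤ q i := fun i => Finset.sum_nonneg fun _ _ => sq_nonneg _
  have hq1 : ∀ i, q i ≤ 1 := by
    intro i
    rw [hqdef]
    calc ∑ j ∈ S, (W i j) ^ 2 ≤ ∑ j, (W i j) ^ 2 :=
          Finset.sum_le_sum_of_subset_of_nonneg (Finset.filter_subset _ _)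
            (fun j _ _ => sq_nonneg _)
      _ = 1 := hrow i
  have hcardS : n - d ≤ S.card := by
    have hr : Y.rank = Fintype.card {i // e i ≠ 0} := hY.rank_eq_card_non_zero_eigs
    have hcc : Fintype.card {i // e i ≠ 0} = (Finset.univ.filter (fun j => e j ≠ 0)).card :=
      Fintype.card_subtype _
    have hsum : S.card + (Finset.univ.filter (fun j => e j ≠ 0)).card = n := by
      rw [hSdef, Finset.card_filter_add_card_filter_not, Finset.card_univ,
        Fintype.card_fin]
    omega
  have hqs : (n : ℝ) - d ≤ ∑ i, q i := by
    have hqc : ∑ i, q i = (S.card : ℝ) := by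
      rw [hqdef]
      rw [Finset.sum_comm]
      rw [Finset.sum_congr rfl (fun j _ => hcol j)]
      simp
    rw [hqc]
    have hnd : (n : ℝ) - d ≤ ((n - d : ℕ) : ℝ) := by
      push_cast [Nat.cast_sub hdn]; ring_nf; rfl
    exact le_trans hnd (by exact_mod_cast hcardS)
  refine le_trans ?_ hstep
  apply rearr hdn _ _ (fun i => sq_nonneg _) ?_ hq0 hq1 hqs
  intro i j hij
  exact pow_le_pow_left₀ (hμ0 j) (hmono i j hij) 2

lemma step1 {n : ℕ} (Y : Matrix (Fin n) (Fin n) ℝ) (lam : Fin n → ℝ)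
    (hdiag : ∀ i, 0 ≤ Y i i) :
    frob2 (Y - Matrix.diagonal (fun i => max (lam i) 0)) + ∑ i, (min (lam i) 0) ^ 2
      ≤ frob2 (Y - Matrix.diagonal lam) := by
  unfold frob2
  rw [← Finset.sum_add_distrib]
  apply Finset.sum_le_sum
  intro i _
  rw [← Finset.add_sum_erase _ _ (Finset.mem_univ i),
      ← Finset.add_sum_erase _ (fun j => ((Y - Matrix.diagonal lam) i j) ^ 2) (Finset.mem_univ i)]
  have hrest : ∑ j ∈ Finset.univ.erase i, ((Y - Matrix.diagonal (fun i => max (lam i) 0)) i j) ^ 2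
      = ∑ j ∈ Finset.univ.erase i, ((Y - Matrix.diagonal lam) i j) ^ 2 := by
    apply Finset.sum_congr rfl
    intro j hj
    have hij : j ≠ i := Finset.ne_of_mem_erase hj
    simp [Matrix.sub_apply, Matrix.diagonal_apply_ne' _ hij]
  rw [add_right_comm, hrest]
  refine add_le_add ?_ le_rfl
  simp only [Matrix.sub_apply, Matrix.diagonal_apply_eq]
  have hy := hdiag i
  rcases le_or_gt 0 (lam i) with h | h
  · rw [max_eq_left h, min_eq_right h]
    ring_nf
    nlinarith
  · rw [max_eq_right h.le, min_eq_left h.le]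
    nlinarith

theorem stmt5 (n d : ℕ) (hd : 1 ≤ d) (hdn : d ≤ n)
    (A : Matrix (Fin n) (Fin n) ℝ) (hA : A.IsSymm)
    (lam : Fin n → ℝ) (u : Fin n → Fin n → ℝ)
    (hsort : ∀ i j : Fin n, i ≤ j → lam j ≤ lam i)
    (horth : ∀ i j : Fin n, u i ⬝ᵥ u j = if i = j then (1 : ℝ) else 0)
    (hspec : A = ∑ i : Fin n, lam i • Matrix.vecMulVec (u i) (u i))
    (B : Matrix (Fin n) (Fin n) ℝ)
    (hB : B = ∑ i ∈ Finset.univ.filter (fun i : Fin n => (i : ℕ) < d),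
      max (lam i) 0 • Matrix.vecMulVec (u i) (u i)) :
    ∀ X : Matrix (Fin n) (Fin n) ℝ, X.IsSymm → X.PosSemidef → X.rank ≤ d →
      frobNorm (B - A) ≤ frobNorm (X - A) := by
  intro X hXs hXpsd hXrank
  classical
  set U : Matrix (Fin n) (Fin n) ℝ := Matrix.of u with hU
  have hUUt : U * Uᵀ = 1 := by
    ext i j
    rw [Matrix.mul_apply]
    have h := horth i j
    simp only [dotProduct] at h
    simpa [hU, Matrix.one_apply] using h
  have hUtU : Uᵀ * U = 1 := mul_eq_one_comm.mp hUUt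
  set ν : Fin n → ℝ := fun i => if (i : ℕ) < d then max (lam i) 0 else 0 with hν
  have hconj : ∀ f : Fin n → ℝ,
      (∑ i, f i • Matrix.vecMulVec (u i) (u i)) = Uᵀ * Matrix.diagonal f * U := by
    intro f
    ext j k
    rw [Matrix.mul_assoc, Matrix.mul_apply]
    simp only [Matrix.sum_apply, Matrix.smul_apply, Matrix.vecMulVec_apply, smul_eq_mul]
    apply Finset.sum_congr rfl
    intro i _
    rw [Matrix.transpose_apply, Matrix.diagonal_mul]
    simp [hU]
    ring
  have hAeq : A = Uᵀ * Matrix.diagonal lam * U := hspec.trans (hconj lam)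
  have hBeq : B = Uᵀ * Matrix.diagonal ν * U := by
    rw [hB, ← hconj ν, Finset.sum_filter]
    apply Finset.sum_congr rfl
    intro i _
    by_cases h : (i : ℕ) < d <;> simp [hν, h]
  set Y : Matrix (Fin n) (Fin n) ℝ := U * X * Uᵀ with hY
  have hXA : X - A = Uᵀ * (Y - Matrix.diagonal lam) * U := by
    rw [Matrix.mul_sub, Matrix.sub_mul, hAeq]
    congr 1
    rw [hY, show Uᵀ * (U * X * Uᵀ) * U = (Uᵀ * U) * X * (Uᵀ * U) by
      simp only [Matrix.mul_assoc], hUtU, Matrix.one_mul, Matrix.mul_one]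
  have hBA : B - A = Uᵀ * (Matrix.diagonal ν - Matrix.diagonal lam) * U := by
    rw [hBeq, hAeq, Matrix.mul_sub, Matrix.sub_mul]
  have hf1 : frob2 (X - A) = frob2 (Y - Matrix.diagonal lam) := by
    rw [hXA, frob2_conj _ _ hUUt hUtU]
  have hf2 : frob2 (B - A) = ∑ i, (ν i - lam i) ^ 2 := by
    rw [hBA, frob2_conj _ _ hUUt hUtU, Matrix.diagonal_sub, frob2_diagonal]
  have hYpsd : Y.PosSemidef := by
    have h := hXpsd.mul_mul_conjTranspose_same U
    have hH : Uᴴ = Uᵀ := by rw [← Matrix.star_eq_conjTranspose, star_eq_transpose_real]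
    rwa [hH] at h
  have hYdiag : ∀ i, 0 ≤ Y i i := by
    intro i
    have h := hYpsd.dotProduct_mulVec_nonneg (Pi.single i 1)
    simp only [Matrix.mulVec, dotProduct, Pi.star_apply, star_trivial] at h
    rwa [Finset.sum_eq_single i (fun k _ hk => by simp [Pi.single_eq_of_ne hk])
        (by simp), Pi.single_eq_same, one_mul,
      Finset.sum_eq_single i (fun k _ hk => by simp [Pi.single_eq_of_ne hk]) (by simp),
      Pi.single_eq_same, mul_one] at h
  have hYrank : Y.rank ≤ d :=
    le_trans (le_trans (Matrix.rank_mul_le_left _ _) (Matrix.rank_mul_le_right _ _)) hXrank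
  have hkey := key hdn (fun i => max (lam i) 0) (fun i => le_max_right _ _)
    (fun i j hij => max_le_max (hsort i j hij) le_rfl) Y hYpsd hYrank
  have hstep := step1 Y lam hYdiag
  have hsplit : ∀ f : Fin n → ℝ, ∑ i, f i =
      (∑ i ∈ Finset.univ.filter (fun i : Fin n => (i : ℕ) < d), f i) +
      ∑ i ∈ Finset.univ.filter (fun i : Fin n => d ≤ (i : ℕ)), f i := by
    intro f
    rw [← Finset.sum_filter_add_sum_filter_not Finset.univ (fun i : Fin n => (i : ℕ) < d)]
    congr 1
    apply Finset.sum_congr _ (fun _ _ => rfl)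
    ext i; simp [not_lt]
  have hBAval : frob2 (B - A) =
      (∑ i ∈ Finset.univ.filter (fun i : Fin n => d ≤ (i : ℕ)), (max (lam i) 0) ^ 2) +
      ∑ i, (min (lam i) 0) ^ 2 := by
    rw [hf2, hsplit (fun i => (ν i - lam i) ^ 2), hsplit (fun i => (min (lam i) 0) ^ 2)]
    have e1 : ∑ i ∈ Finset.univ.filter (fun i : Fin n => (i : ℕ) < d), (ν i - lam i) ^ 2
        = ∑ i ∈ Finset.univ.filter (fun i : Fin n => (i : ℕ) < d), (min (lam i) 0) ^ 2 := by
      apply Finset.sum_congr rfl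
      intro i hi
      have h : (i : ℕ) < d := by simpa using hi
      simp only [hν, if_pos h]
      rcases le_or_gt 0 (lam i) with hl | hl
      · rw [max_eq_left hl, min_eq_right hl]; ring
      · rw [max_eq_right hl.le, min_eq_left hl.le]; ring
    have e2 : ∑ i ∈ Finset.univ.filter (fun i : Fin n => d ≤ (i : ℕ)), (ν i - lam i) ^ 2
        = ∑ i ∈ Finset.univ.filter (fun i : Fin n => d ≤ (i : ℕ)),
            ((max (lam i) 0) ^ 2 + (min (lam i) 0) ^ 2) := by
      apply Finset.sum_congr rfl
      intro i hi
      have h : ¬ (i : ℕ) < d := by simpa [not_lt] using (by simpa using hi : d ≤ (i : ℕ))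
      simp only [hν, if_neg h]
      rcases le_or_gt 0 (lam i) with hl | hl
      · rw [max_eq_left hl, min_eq_right hl]; ring
      · rw [max_eq_right hl.le, min_eq_left hl.le]; ring
    rw [e1, e2, Finset.sum_add_distrib]
    ring
  have hfinal : frob2 (B - A) ≤ frob2 (X - A) := by
    rw [hBAval, hf1]
    linarith
  unfold frobNorm
  exact Real.sqrt_le_sqrt hfinal
end

section
/- Let A ∈ ℝ^{d×d}, and suppose X₀ ∈ SO(d) maximizes X ↦ trace(AᵀX) over SO(d). Then the matrix P = Aᵀ X₀ is symmetric. -/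
open Matrix

theorem stmt9 (d : ℕ) (A X₀ : Matrix (Fin d) (Fin d) ℝ)
    (hX₀ : X₀ᵀ * X₀ = 1 ∧ X₀.det = 1)
    (hmax : ∀ X : Matrix (Fin d) (Fin d) ℝ, Xᵀ * X = 1 ∧ X.det = 1 →
      Matrix.trace (Aᵀ * X) ≤ Matrix.trace (Aᵀ * X₀)) :
    (Aᵀ * X₀)ᵀ = Aᵀ * X₀ := by
  obtain ⟨hX₀o, hX₀d⟩ := hX₀
  set P := Aᵀ * X₀ with hP
  -- Key step: for every antisymmetric M, trace (P * M) = 0.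
  have key : ∀ M : Matrix (Fin d) (Fin d) ℝ, Mᵀ = -M → Matrix.trace (P * M) = 0 := by
    intro M hM
    letI : SeminormedRing (Matrix (Fin d) (Fin d) ℝ) := Matrix.linftyOpSemiNormedRing
    letI : NormedRing (Matrix (Fin d) (Fin d) ℝ) := Matrix.linftyOpNormedRing
    letI : NormedAlgebra ℝ (Matrix (Fin d) (Fin d) ℝ) := Matrix.linftyOpNormedAlgebra
    set e : ℝ → Matrix (Fin d) (Fin d) ℝ := fun t => NormedSpace.exp (t • M) with he
    have hderiv : ∀ t : ℝ, HasDerivAt e (NormedSpace.exp (t • M) * M) t := fun t =>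
      hasDerivAt_exp_smul_const M t
    have hcont : Continuous e :=
      continuous_iff_continuousAt.mpr fun t => (hderiv t).continuousAt
    have he0 : e 0 = 1 := by simp [he, NormedSpace.exp_zero]
    -- exp (t • M) is orthogonal
    have horth : ∀ t : ℝ, (e t)ᵀ * e t = 1 := by
      intro t
      have h1 : (e t)ᵀ = NormedSpace.exp (-(t • M)) := by
        rw [he, ← Matrix.exp_transpose, Matrix.transpose_smul, hM, smul_neg]
      rw [h1, he, ← Matrix.exp_add_of_commute _ _ ((Commute.refl (t • M)).neg_left),
        neg_add_cancel, NormedSpace.exp_zero]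
    have hdetsq : ∀ t : ℝ, (e t).det * (e t).det = 1 := by
      intro t
      have := congrArg Matrix.det (horth t)
      rwa [Matrix.det_mul, Matrix.det_transpose, Matrix.det_one] at this
    -- exp (t • M) has determinant 1, by connectedness
    have hdet : ∀ t : ℝ, (e t).det = 1 := by
      intro t
      rcases mul_self_eq_one_iff.mp (hdetsq t) with h | h
      · exact h
      · exfalso
        have hc : ContinuousOn (fun s => (e s).det) (Set.uIcc t 0) :=
          (hcont.matrix_det).continuousOn
        have h0 : (0 : ℝ) ∈ Set.uIcc ((e t).det) ((e 0).det) := by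
          rw [h, he0, Matrix.det_one]
          simp [Set.mem_uIcc]
        obtain ⟨s, _, hs⟩ := intermediate_value_uIcc hc h0
        have hs' : (e s).det = 0 := hs
        have := hdetsq s
        rw [hs'] at this
        norm_num at this
    -- X₀ * e t is in SO(d)
    have hSO : ∀ t : ℝ, (X₀ * e t)ᵀ * (X₀ * e t) = 1 ∧ (X₀ * e t).det = 1 := by
      intro t
      constructor
      · rw [Matrix.transpose_mul, Matrix.mul_assoc, ← Matrix.mul_assoc X₀ᵀ, hX₀o,
          Matrix.one_mul, horth]
      · rw [Matrix.det_mul, hX₀d, hdet, one_mul]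
    -- the trace function has a global (hence local) max at t = 0
    have hle : ∀ t : ℝ, Matrix.trace (P * e t) ≤ Matrix.trace (P * e 0) := by
      intro t
      have := hmax (X₀ * e t) (hSO t)
      rw [← Matrix.mul_assoc] at this
      rw [he0, Matrix.mul_one]
      exact this
    have hmax0 : IsLocalMax (fun t : ℝ => Matrix.trace (P * e t)) 0 :=
      Filter.Eventually.of_forall hle
    -- derivative of t ↦ trace (P * e t) at 0 is trace (P * M)
    let L : Matrix (Fin d) (Fin d) ℝ →ₗ[ℝ] ℝ :=
      (Matrix.traceLinearMap (Fin d) ℝ ℝ).comp (LinearMap.mulLeft ℝ P)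
    have hdf : HasDerivAt (fun t : ℝ => Matrix.trace (P * e t))
        (Matrix.trace (P * (e 0 * M))) 0 := by
      have := (LinearMap.toContinuousLinearMap L).hasFDerivAt.comp_hasDerivAt 0 (hderiv 0)
      convert this using 1 <;> rfl
    have hzero := hmax0.hasDerivAt_eq_zero hdf
    rw [he0, Matrix.one_mul] at hzero
    exact hzero
  -- Deduce trace (Pᵀ * M) = 0 for antisymmetric M
  have key' : ∀ M : Matrix (Fin d) (Fin d) ℝ, Mᵀ = -M → Matrix.trace (Pᵀ * M) = 0 := by
    intro M hM
    have hrw : (Mᵀ * P)ᵀ = Pᵀ * M := by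
      rw [Matrix.transpose_mul, Matrix.transpose_transpose]
    calc Matrix.trace (Pᵀ * M) = Matrix.trace ((Mᵀ * P)ᵀ) := by rw [hrw]
      _ = Matrix.trace (Mᵀ * P) := Matrix.trace_transpose _
      _ = -Matrix.trace (M * P) := by rw [hM, Matrix.neg_mul, Matrix.trace_neg]
      _ = -Matrix.trace (P * M) := by rw [Matrix.trace_mul_comm]
      _ = 0 := by rw [key M hM, neg_zero]
  -- Apply to S = P - Pᵀ
  set S : Matrix (Fin d) (Fin d) ℝ := P - Pᵀ with hS
  have hSanti : Sᵀ = -S := by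
    rw [hS, Matrix.transpose_sub, Matrix.transpose_transpose, neg_sub]
  have htr : Matrix.trace (Sᵀ * S) = 0 := by
    rw [hSanti, Matrix.neg_mul, Matrix.trace_neg]
    rw [hS]
    rw [Matrix.sub_mul, Matrix.trace_sub, key S hSanti, key' S hSanti, sub_zero, neg_zero]
  have hSzero : S = 0 := by
    have hsum : ∑ j : Fin d, ∑ k : Fin d, S k j * S k j = 0 := by
      have h : Matrix.trace (Sᵀ * S) = ∑ j : Fin d, ∑ k : Fin d, S k j * S k j := by
        simp [Matrix.trace, Matrix.mul_apply, Matrix.diag, Matrix.transpose_apply]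
      rw [← h, htr]
    ext i j
    have h1 : ∀ j' ∈ Finset.univ, (0:ℝ) ≤ ∑ k : Fin d, S k j' * S k j' := fun j' _ =>
      Finset.sum_nonneg fun k _ => mul_self_nonneg _
    have h2 := (Finset.sum_eq_zero_iff_of_nonneg h1).mp hsum j (Finset.mem_univ j)
    have h3 : ∀ k ∈ Finset.univ, (0:ℝ) ≤ S k j * S k j := fun k _ => mul_self_nonneg _
    have h4 := (Finset.sum_eq_zero_iff_of_nonneg h3).mp h2 i (Finset.mem_univ i)
    have := mul_self_eq_zero.mp h4
    simpa using this
  have h5 : P - Pᵀ = 0 := hSzero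
  have h6 := sub_eq_zero.mp h5
  exact h6.symm
end

section
/- Let A ∈ ℝ^{d×d} with singular value decomposition A = U diag(σ_1,…,σ_d) Vᵀ, where σ_1 ≥ ⋯ ≥ σ_d ≥ 0 and U, V ∈ O(d). Then X* = U diag(1,…,1, det(UVᵀ)) Vᵀ maximizes trace(AᵀX) over X ∈ SO(d), i.e., for all X ∈ SO(d), trace(AᵀX) ≤ σ_1 + ⋯ + σ_{d−1} + det(UVᵀ)·σ_d. -/
open Matrix Finset

/-- Columns of an orthogonal matrix are unit vectors, so diagonal entries are ≤ 1. -/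
lemma aux_diag_le_one {d : ℕ} (W : Matrix (Fin d) (Fin d) ℝ) (hW : Wᵀ * W = 1) (i : Fin d) :
    W i i ≤ 1 := by
  have h : ∑ k, W k i * W k i = 1 := by
    have := congrFun (congrFun hW i) i
    simpa [Matrix.mul_apply, Matrix.transpose_apply, Matrix.one_apply] using this
  have h1 : W i i * W i i ≤ 1 := h ▸ Finset.single_le_sum
      (f := fun k => W k i * W k i) (fun k _ => mul_self_nonneg _) (mem_univ i)
  nlinarith [mul_self_nonneg (W i i)]

/-- Trace bound for orthogonal matrices: trace W ≤ (d-1) + det W. -/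
lemma aux_trace_le {d : ℕ} (W : Matrix (Fin d) (Fin d) ℝ) (hW : Wᵀ * W = 1) :
    Matrix.trace W ≤ (d : ℝ) - 1 + W.det := by
  have hdet2 : W.det * W.det = 1 := by
    have := congrArg Matrix.det hW
    simpa [Matrix.det_mul, Matrix.det_transpose] using this
  have htr : Matrix.trace W ≤ (d : ℝ) := by
    calc Matrix.trace W = ∑ i, W i i := rfl
      _ ≤ ∑ _i : Fin d, (1:ℝ) := Finset.sum_le_sum fun i _ => aux_diag_le_one W hW i
      _ = (d : ℝ) := by simp
  rcases mul_self_eq_one_iff.mp hdet2 with h1 | h1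
  · rw [h1]; linarith
  · -- det W = -1 : find an eigenvector with eigenvalue -1
    rw [h1]
    have hker : (W + 1).det = 0 := by
      have e1 : (W + 1).det = (Wᵀ + 1).det := by
        rw [← Matrix.det_transpose (W + 1)]; simp [Matrix.transpose_add]
      have e2 : Wᵀ + 1 = Wᵀ * (W + 1) := by
        rw [Matrix.mul_add, hW, Matrix.mul_one, add_comm]
      have e3 : (W + 1).det = W.det * (W + 1).det := by
        calc (W + 1).det = (Wᵀ + 1).det := e1
          _ = (Wᵀ * (W + 1)).det := by rw [← e2]
          _ = W.det * (W + 1).det := by rw [Matrix.det_mul, Matrix.det_transpose]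
      rw [h1] at e3
      linarith
    obtain ⟨v, hv0, hv⟩ := Matrix.exists_mulVec_eq_zero_iff.mpr hker
    have hWv : W *ᵥ v = -v := by
      have : W *ᵥ v + v = 0 := by
        simpa [Matrix.add_mulVec, Matrix.one_mulVec] using hv
      linear_combination (norm := module) this
    -- normalize v
    have hvsq : 0 < ∑ k, v k * v k := by
      rcases Function.ne_iff.mp hv0 with ⟨k, hk⟩
      have hk' : v k ≠ 0 := hk
      have : 0 < v k * v k := mul_self_pos.mpr hk'
      exact lt_of_lt_of_le this (Finset.single_le_sum
        (f := fun k => v k * v k) (fun k _ => mul_self_nonneg _) (mem_univ k))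
    set c : ℝ := Real.sqrt (∑ k, v k * v k) with hc
    have hcpos : 0 < c := Real.sqrt_pos.mpr hvsq
    set u : Fin d → ℝ := c⁻¹ • v with hu
    have hcsq : c * c = ∑ k, v k * v k := Real.mul_self_sqrt hvsq.le
    have hunorm : ∑ k, u k * u k = 1 := by
      have h0 : ∑ k, u k * u k = c⁻¹ * c⁻¹ * ∑ k, v k * v k := by
        rw [Finset.mul_sum]; apply Finset.sum_congr rfl; intro k _
        simp [hu]; ring
      rw [h0, ← hcsq]
      field_simp
    have hWu : W *ᵥ u = -u := by
      rw [hu, Matrix.mulVec_smul, hWv]; module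
    -- reflection
    set M : Matrix (Fin d) (Fin d) ℝ := Matrix.vecMulVec u u with hM
    have hMsym : Mᵀ = M := by
      ext i j; simp [hM, Matrix.vecMulVec_apply, mul_comm]
    have hMM : M * M = M := by
      ext i j
      simp only [hM, Matrix.mul_apply, Matrix.vecMulVec_apply]
      calc ∑ k, u i * u k * (u k * u j) = u i * u j * ∑ k, u k * u k := by
            rw [Finset.mul_sum]; apply Finset.sum_congr rfl; intros; ring
        _ = u i * u j := by rw [hunorm, mul_one]
    set P : Matrix (Fin d) (Fin d) ℝ := 1 - (M + M) with hP
    have hPsym : Pᵀ = P := by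
      rw [hP, Matrix.transpose_sub, Matrix.transpose_add, hMsym, Matrix.transpose_one]
    have hPP : P * P = 1 := by
      rw [hP]
      have expand : (1 - (M + M)) * (1 - (M + M))
          = 1 - (M + M) - (M + M) + (M*M + M*M + M*M + M*M) := by noncomm_ring
      rw [expand, hMM]; abel
    set W' : Matrix (Fin d) (Fin d) ℝ := W * P with hW'
    have hW'o : W'ᵀ * W' = 1 := by
      rw [hW', Matrix.transpose_mul, hPsym, Matrix.mul_assoc, ← Matrix.mul_assoc Wᵀ W P,
        hW, Matrix.one_mul, hPP]
    have hWW' : W = W' * P := by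
      rw [hW', Matrix.mul_assoc, hPP, Matrix.mul_one]
    have hMu : M *ᵥ u = u := by
      ext i
      simp only [hM, Matrix.mulVec, Matrix.vecMulVec_apply, dotProduct]
      calc ∑ k, u i * u k * u k = u i * ∑ k, u k * u k := by
            rw [Finset.mul_sum]; apply Finset.sum_congr rfl; intros; ring
        _ = u i := by rw [hunorm, mul_one]
    have hW'u : W' *ᵥ u = u := by
      rw [hW', ← Matrix.mulVec_mulVec, hP]
      have hPu : (1 - (M + M)) *ᵥ u = -u := by
        rw [Matrix.sub_mulVec, Matrix.one_mulVec, Matrix.add_mulVec, hMu]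
        module
      rw [hPu, Matrix.mulVec_neg, hWu]
      module
    have htrM : Matrix.trace (W' * M) = 1 := by
      have : Matrix.trace (W' * M) = ∑ i, (W' *ᵥ u) i * u i := by
        simp only [Matrix.trace, Matrix.diag, Matrix.mul_apply, hM, Matrix.vecMulVec_apply,
          Matrix.mulVec, dotProduct]
        apply Finset.sum_congr rfl; intro i _
        rw [Finset.sum_mul]; apply Finset.sum_congr rfl; intros; ring
      rw [this, hW'u, hunorm]
    have htrW' : Matrix.trace W' ≤ (d : ℝ) := by
      calc Matrix.trace W' = ∑ i, W' i i := rfl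
        _ ≤ ∑ _i : Fin d, (1:ℝ) := Finset.sum_le_sum fun i _ => aux_diag_le_one W' hW'o i
        _ = (d : ℝ) := by simp
    have htrfin : Matrix.trace W = Matrix.trace W' - 2 := by
      rw [hWW', hP, Matrix.mul_sub, Matrix.mul_one, Matrix.mul_add, Matrix.trace_sub,
        Matrix.trace_add, htrM]
      ring
    rw [htrfin]
    linarith

theorem stmt12 (d : ℕ) (hd : 1 ≤ d)
    (A U V : Matrix (Fin d) (Fin d) ℝ) (sigma : Fin d → ℝ)
    (hU : Uᵀ * U = 1) (hV : Vᵀ * V = 1)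
    (hnn : ∀ i, 0 ≤ sigma i)
    (hsort : ∀ i j : Fin d, i ≤ j → sigma j ≤ sigma i)
    (hSVD : A = U * Matrix.diagonal sigma * Vᵀ) :
    ∀ X : Matrix (Fin d) (Fin d) ℝ, Xᵀ * X = 1 ∧ X.det = 1 →
      Matrix.trace (Aᵀ * X) ≤
        ∑ i : Fin d, (if (i : ℕ) = d - 1 then (U * Vᵀ).det * sigma i else sigma i) := by
  rintro X ⟨hXo, hXdet⟩
  have hUU : U * Uᵀ = 1 := mul_eq_one_comm.mp hU
  set W : Matrix (Fin d) (Fin d) ℝ := Uᵀ * X * V with hWdef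
  have hWo : Wᵀ * W = 1 := by
    rw [hWdef]
    calc (Uᵀ * X * V)ᵀ * (Uᵀ * X * V)
        = Vᵀ * (Xᵀ * ((U * Uᵀ) * (X * V))) := by
          simp only [Matrix.transpose_mul, Matrix.transpose_transpose, Matrix.mul_assoc]
      _ = 1 := by rw [hUU, Matrix.one_mul, ← Matrix.mul_assoc Xᵀ X V, hXo,
          Matrix.one_mul, hV]
  have hdetW : W.det = (U * Vᵀ).det := by
    rw [hWdef]
    simp only [Matrix.det_mul, Matrix.det_transpose, hXdet]
    ring
  -- trace(AᵀX) = ∑ σ i * W i i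
  have htr : Matrix.trace (Aᵀ * X) = ∑ i, sigma i * W i i := by
    have hAt : Aᵀ = V * Matrix.diagonal sigma * Uᵀ := by
      rw [hSVD]
      simp [Matrix.transpose_mul, Matrix.diagonal_transpose, Matrix.mul_assoc]
    have e1 : Aᵀ * X = V * (Matrix.diagonal sigma * (Uᵀ * X)) := by
      rw [hAt]; noncomm_ring
    rw [e1, Matrix.trace_mul_comm]
    have e2 : Matrix.diagonal sigma * (Uᵀ * X) * V = Matrix.diagonal sigma * W := by
      rw [hWdef]; noncomm_ring
    rw [e2]
    simp [Matrix.trace, Matrix.diag, Matrix.diagonal_mul]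
  -- set up the last index
  have hdpos : 0 < d := hd
  set i₀ : Fin d := ⟨d - 1, by omega⟩ with hi₀
  set t : ℝ := sigma i₀ with ht
  have htnn : 0 ≤ t := hnn i₀
  have htle : ∀ i : Fin d, t ≤ sigma i := fun i => hsort i i₀ (by
    simp only [hi₀, Fin.le_def]; omega)
  -- RHS simplification
  have hrhs : ∑ i : Fin d, (if (i : ℕ) = d - 1 then (U * Vᵀ).det * sigma i else sigma i)
      = (∑ i, sigma i) - t + (U * Vᵀ).det * t := by
    have key : ∀ i : Fin d, (if (i : ℕ) = d - 1 then (U * Vᵀ).det * sigma i else sigma i)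
        = sigma i + (if i = i₀ then ((U * Vᵀ).det - 1) * t else 0) := by
      intro i
      by_cases h : (i : ℕ) = d - 1
      · have : i = i₀ := by
          apply Fin.ext; simp [hi₀, h]
        rw [if_pos h, if_pos this, this, ← ht]; ring
      · have : ¬ i = i₀ := by
          intro he; exact h (by rw [he])
        rw [if_neg h, if_neg this, add_zero]
    rw [Finset.sum_congr rfl (fun i _ => key i), Finset.sum_add_distrib,
      Finset.sum_ite_eq' univ i₀]
    simp; ring
  rw [htr, hrhs]
  -- main estimate
  have hsplit : ∑ i, sigma i * W i i
      = (∑ i, (sigma i - t) * W i i) + t * Matrix.trace W := by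
    simp only [Matrix.trace, Matrix.diag, Finset.mul_sum, ← Finset.sum_add_distrib]
    apply Finset.sum_congr rfl; intros; ring
  have h1 : ∑ i, (sigma i - t) * W i i ≤ ∑ i, (sigma i - t) := by
    apply Finset.sum_le_sum; intro i _
    have := aux_diag_le_one W hWo i
    nlinarith [htle i]
  have h2 : t * Matrix.trace W ≤ t * ((d : ℝ) - 1 + W.det) :=
    mul_le_mul_of_nonneg_left (aux_trace_le W hWo) htnn
  have h3 : ∑ i, (sigma i - t) = (∑ i, sigma i) - d * t := by
    rw [Finset.sum_sub_distrib]
    simp [mul_comm]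
  rw [hsplit]
  rw [h3] at h1
  rw [hdetW] at h2
  have hd1 : (1:ℝ) ≤ (d:ℝ) := by exact_mod_cast hd
  nlinarith [h1, h2]
end

section
/- Let Λ = diag(λ_1,…,λ_n) with λ_1 ≥ ⋯ ≥ λ_n ≥ 0, and let Γ = diag(μ_1,…,μ_n) with μ_1 ≥ ⋯ ≥ μ_n ≥ 0. Then for every K ∈ O(n), ‖K Γ Kᵀ − Λ‖_F ≥ ‖Γ − Λ‖_F, i.e., the minimum over orthogonal K is attained at K = I. -/
open Matrix Finset

lemma ind_sum (n k : ℕ) (hk : k < n) :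
    ∑ i : Fin n, (if (i:ℕ) ≤ k then (1:ℝ) else 0) = (k+1 : ℕ) := by
  rw [Fin.sum_univ_eq_sum_range (fun i => if i ≤ k then (1:ℝ) else 0), ← Finset.sum_filter]
  have : (range n).filter (· ≤ k) = range (k+1) := by
    ext i; simp [Nat.lt_succ_iff]; omega
  rw [this]; simp

lemma sum4_comm {M : Type*} [AddCommMonoid M] {α β γ δ : Type*}
    (s : Finset α) (t : Finset β) (u : Finset γ) (v : Finset δ) (f : α → β → γ → δ → M) :
    ∑ i ∈ s, ∑ j ∈ t, ∑ k ∈ u, ∑ l ∈ v, f i j k l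
      = ∑ k ∈ u, ∑ l ∈ v, ∑ i ∈ s, ∑ j ∈ t, f i j k l := by
  have h1 : ∑ i ∈ s, ∑ j ∈ t, ∑ k ∈ u, ∑ l ∈ v, f i j k l
      = ∑ i ∈ s, ∑ k ∈ u, ∑ j ∈ t, ∑ l ∈ v, f i j k l :=
    Finset.sum_congr rfl fun i _ => Finset.sum_comm
  have h2 : ∑ i ∈ s, ∑ k ∈ u, ∑ j ∈ t, ∑ l ∈ v, f i j k l
      = ∑ k ∈ u, ∑ i ∈ s, ∑ j ∈ t, ∑ l ∈ v, f i j k l := Finset.sum_comm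
  have h3 : ∑ k ∈ u, ∑ i ∈ s, ∑ j ∈ t, ∑ l ∈ v, f i j k l
      = ∑ k ∈ u, ∑ i ∈ s, ∑ l ∈ v, ∑ j ∈ t, f i j k l :=
    Finset.sum_congr rfl fun k _ => Finset.sum_congr rfl fun i _ => Finset.sum_comm
  have h4 : ∑ k ∈ u, ∑ i ∈ s, ∑ l ∈ v, ∑ j ∈ t, f i j k l
      = ∑ k ∈ u, ∑ l ∈ v, ∑ i ∈ s, ∑ j ∈ t, f i j k l :=
    Finset.sum_congr rfl fun k _ => Finset.sum_comm
  rw [h1, h2, h3, h4]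

lemma key_s17 (n : ℕ) (lam mu : Fin n → ℝ)
    (hlamnn : ∀ i, 0 ≤ lam i) (hlamsort : ∀ i j : Fin n, i ≤ j → lam j ≤ lam i)
    (hmunn : ∀ i, 0 ≤ mu i) (hmusort : ∀ i j : Fin n, i ≤ j → mu j ≤ mu i)
    (P : Fin n → Fin n → ℝ) (hP0 : ∀ i j, 0 ≤ P i j)
    (hrow : ∀ i, ∑ j, P i j = 1) (hcol : ∀ j, ∑ i, P i j = 1) :
    ∑ i, ∑ j, P i j * (lam i * mu j) ≤ ∑ i, lam i * mu i := by
  classical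
  set F : ℕ → ℝ := fun k => if h : k < n then lam ⟨k, h⟩ else 0 with hF
  set G : ℕ → ℝ := fun k => if h : k < n then mu ⟨k, h⟩ else 0 with hG
  set a : ℕ → ℝ := fun k => F k - F (k+1) with ha
  set b : ℕ → ℝ := fun k => G k - G (k+1) with hb
  have haux : ∀ (f : Fin n → ℝ), (∀ i, 0 ≤ f i) → (∀ i j : Fin n, i ≤ j → f j ≤ f i) →
      ∀ k, (if h : k+1 < n then f ⟨k+1, h⟩ else 0) ≤ (if h : k < n then f ⟨k, h⟩ else 0) := by
    intro f h0 hs k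
    split_ifs with h1 h2 h2
    · exact hs ⟨k, h2⟩ ⟨k+1, h1⟩ (Fin.mk_le_mk.mpr (Nat.le_succ k))
    · omega
    · exact h0 _
    · exact le_refl 0
  have ha0 : ∀ k, 0 ≤ a k := fun k =>
    sub_nonneg.mpr (haux lam hlamnn hlamsort k)
  have hb0 : ∀ k, 0 ≤ b k := fun k =>
    sub_nonneg.mpr (haux mu hmunn hmusort k)
  have htel : ∀ (H : ℕ → ℝ) (m : ℕ), m ≤ n →
      H m - H n = ∑ k ∈ Ico m n, (H k - H (k+1)) := by
    intro H m hm
    have h1 := Finset.sum_range_sub' H n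
    have h2 := Finset.sum_range_sub' H m
    rw [Finset.sum_Ico_eq_sub _ hm, h1, h2]; ring
  have hlam : ∀ i : Fin n, lam i = ∑ k ∈ range n, (if (i:ℕ) ≤ k then a k else 0) := by
    intro i
    have h1 : F (i:ℕ) - F n = ∑ k ∈ Ico (i:ℕ) n, a k := htel F i i.2.le
    have hFn : F n = 0 := by simp [hF]
    have hFi : F (i:ℕ) = lam i := by simp [hF, i.2]
    have h2 : Ico (i:ℕ) n = (range n).filter (fun k => (i:ℕ) ≤ k) := by
      ext k; simp [Nat.lt_succ_iff]; omega
    rw [← Finset.sum_filter, ← h2, ← h1, hFn, hFi, sub_zero]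
  have hmu : ∀ i : Fin n, mu i = ∑ k ∈ range n, (if (i:ℕ) ≤ k then b k else 0) := by
    intro i
    have h1 : G (i:ℕ) - G n = ∑ k ∈ Ico (i:ℕ) n, b k := htel G i i.2.le
    have hGn : G n = 0 := by simp [hG]
    have hGi : G (i:ℕ) = mu i := by simp [hG, i.2]
    have h2 : Ico (i:ℕ) n = (range n).filter (fun k => (i:ℕ) ≤ k) := by
      ext k; simp [Nat.lt_succ_iff]; omega
    rw [← Finset.sum_filter, ← h2, ← h1, hGn, hGi, sub_zero]
  -- expand LHS
  have expandL : ∑ i, ∑ j, P i j * (lam i * mu j)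
      = ∑ k ∈ range n, ∑ l ∈ range n, a k * b l *
          (∑ i : Fin n, ∑ j : Fin n, (if (i:ℕ) ≤ k then (1:ℝ) else 0) * (if (j:ℕ) ≤ l then (1:ℝ) else 0) * P i j) := by
    have step1 : ∑ i, ∑ j, P i j * (lam i * mu j)
        = ∑ i : Fin n, ∑ j : Fin n, ∑ k ∈ range n, ∑ l ∈ range n,
            (a k * b l * ((if (i:ℕ) ≤ k then (1:ℝ) else 0) * (if (j:ℕ) ≤ l then (1:ℝ) else 0) * P i j)) := by
      refine Finset.sum_congr rfl fun i _ => Finset.sum_congr rfl fun j _ => ?_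
      rw [hlam i, hmu j, Finset.sum_mul_sum, Finset.mul_sum]
      refine Finset.sum_congr rfl fun k _ => ?_
      rw [Finset.mul_sum]
      refine Finset.sum_congr rfl fun l _ => ?_
      split_ifs <;> ring
    rw [step1, sum4_comm]
    refine Finset.sum_congr rfl fun k _ => Finset.sum_congr rfl fun l _ => ?_
    rw [Finset.mul_sum]
    refine Finset.sum_congr rfl fun i _ => ?_
    rw [Finset.mul_sum]
  -- expand RHS
  have expandR : ∑ i, lam i * mu i
      = ∑ k ∈ range n, ∑ l ∈ range n, a k * b l *
          (∑ i : Fin n, (if (i:ℕ) ≤ k then (1:ℝ) else 0) * (if (i:ℕ) ≤ l then (1:ℝ) else 0)) := by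
    have step1 : ∑ i, lam i * mu i
        = ∑ i : Fin n, ∑ k ∈ range n, ∑ l ∈ range n,
            (a k * b l * ((if (i:ℕ) ≤ k then (1:ℝ) else 0) * (if (i:ℕ) ≤ l then (1:ℝ) else 0))) := by
      refine Finset.sum_congr rfl fun i _ => ?_
      rw [hlam i, hmu i, Finset.sum_mul_sum]
      refine Finset.sum_congr rfl fun k _ => Finset.sum_congr rfl fun l _ => ?_
      split_ifs <;> ring
    rw [step1, Finset.sum_comm]
    refine Finset.sum_congr rfl fun k _ => ?_
    rw [Finset.sum_comm]
    refine Finset.sum_congr rfl fun l _ => ?_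
    rw [← Finset.mul_sum]
  rw [expandL, expandR]
  refine Finset.sum_le_sum fun k hk => Finset.sum_le_sum fun l hl => ?_
  simp only [mem_range] at hk hl
  have hS : ∑ i : Fin n, (if (i:ℕ) ≤ k then (1:ℝ) else 0) * (if (i:ℕ) ≤ l then (1:ℝ) else 0)
      = ((min k l : ℕ) + 1 : ℕ) := by
    rw [← ind_sum n (min k l) (lt_of_le_of_lt (min_le_left _ _) hk)]
    refine Finset.sum_congr rfl fun i _ => ?_
    by_cases h1 : (i:ℕ) ≤ k <;> by_cases h2 : (i:ℕ) ≤ l <;>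
      simp [h1, h2, le_min_iff] <;> omega
  have hTrow : ∑ i : Fin n, ∑ j : Fin n, (if (i:ℕ) ≤ k then (1:ℝ) else 0) * (if (j:ℕ) ≤ l then (1:ℝ) else 0) * P i j
      ≤ (k + 1 : ℕ) := by
    calc ∑ i : Fin n, ∑ j : Fin n, (if (i:ℕ) ≤ k then (1:ℝ) else 0) * (if (j:ℕ) ≤ l then (1:ℝ) else 0) * P i j
        ≤ ∑ i : Fin n, ∑ j : Fin n, (if (i:ℕ) ≤ k then (1:ℝ) else 0) * P i j := by
          refine Finset.sum_le_sum fun i _ => Finset.sum_le_sum fun j _ => ?_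
          have h1 : (0:ℝ) ≤ if (i:ℕ) ≤ k then (1:ℝ) else 0 := by positivity
          have h2 : (if (j:ℕ) ≤ l then (1:ℝ) else 0) ≤ 1 := by split_ifs <;> norm_num
          rw [mul_assoc]
          exact mul_le_mul_of_nonneg_left (mul_le_of_le_one_left (hP0 i j) h2) h1
      _ = ∑ i : Fin n, (if (i:ℕ) ≤ k then (1:ℝ) else 0) := by
          refine Finset.sum_congr rfl fun i _ => ?_
          rw [← Finset.mul_sum, hrow i, mul_one]
      _ = (k + 1 : ℕ) := ind_sum n k hk
  have hTcol : ∑ i : Fin n, ∑ j : Fin n, (if (i:ℕ) ≤ k then (1:ℝ) else 0) * (if (j:ℕ) ≤ l then (1:ℝ) else 0) * P i j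
      ≤ (l + 1 : ℕ) := by
    rw [Finset.sum_comm]
    calc ∑ j : Fin n, ∑ i : Fin n, (if (i:ℕ) ≤ k then (1:ℝ) else 0) * (if (j:ℕ) ≤ l then (1:ℝ) else 0) * P i j
        ≤ ∑ j : Fin n, ∑ i : Fin n, (if (j:ℕ) ≤ l then (1:ℝ) else 0) * P i j := by
          refine Finset.sum_le_sum fun j _ => Finset.sum_le_sum fun i _ => ?_
          have h1 : (0:ℝ) ≤ if (j:ℕ) ≤ l then (1:ℝ) else 0 := by positivity
          have h2 : (if (i:ℕ) ≤ k then (1:ℝ) else 0) ≤ 1 := by split_ifs <;> norm_num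
          rw [mul_comm (if (i:ℕ) ≤ k then (1:ℝ) else 0), mul_assoc]
          exact mul_le_mul_of_nonneg_left (mul_le_of_le_one_left (hP0 i j) h2) h1
      _ = ∑ j : Fin n, (if (j:ℕ) ≤ l then (1:ℝ) else 0) := by
          refine Finset.sum_congr rfl fun j _ => ?_
          rw [← Finset.mul_sum, hcol j, mul_one]
      _ = (l + 1 : ℕ) := ind_sum n l hl
  have hT : ∑ i : Fin n, ∑ j : Fin n, (if (i:ℕ) ≤ k then (1:ℝ) else 0) * (if (j:ℕ) ≤ l then (1:ℝ) else 0) * P i j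
      ≤ ((min k l : ℕ) + 1 : ℕ) := by
    rcases le_total k l with h | h
    · simpa [min_eq_left h] using hTrow
    · simpa [min_eq_right h] using hTcol
  rw [hS]
  have := mul_nonneg (ha0 k) (hb0 l)
  nlinarith [hT]

theorem stmt17 (n : ℕ) (lam mu : Fin n → ℝ)
    (hlamnn : ∀ i, 0 ≤ lam i) (hlamsort : ∀ i j : Fin n, i ≤ j → lam j ≤ lam i)
    (hmunn : ∀ i, 0 ≤ mu i) (hmusort : ∀ i j : Fin n, i ≤ j → mu j ≤ mu i)
    (K : Matrix (Fin n) (Fin n) ℝ) (hK : Kᵀ * K = 1) :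
    ∑ i, ∑ j, ((Matrix.diagonal mu - Matrix.diagonal lam) i j) ^ 2 ≤
      ∑ i, ∑ j, ((K * Matrix.diagonal mu * Kᵀ - Matrix.diagonal lam) i j) ^ 2 := by
  classical
  set M := K * Matrix.diagonal mu * Kᵀ with hMdef
  have hKK : K * Kᵀ = 1 := mul_eq_one_comm.mp hK
  have hrow : ∀ i, ∑ j, K i j ^ 2 = 1 := by
    intro i
    have := congrArg (fun A => A i i) hKK
    simpa [Matrix.mul_apply, Matrix.one_apply, sq] using this
  have hcol : ∀ j, ∑ i, K i j ^ 2 = 1 := by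
    intro j
    have := congrArg (fun A => A j j) hK
    simpa [Matrix.mul_apply, Matrix.one_apply, sq] using this
  have hMsym : Mᵀ = M := by
    simp [hMdef, Matrix.transpose_mul, Matrix.diagonal_transpose, Matrix.mul_assoc]
  have hMM : Mᵀ * M = K * Matrix.diagonal (mu * mu) * Kᵀ := by
    rw [hMsym, hMdef]
    simp only [Matrix.mul_assoc]
    rw [← Matrix.mul_assoc Kᵀ K, hK, Matrix.one_mul,
      ← Matrix.mul_assoc (Matrix.diagonal mu) (Matrix.diagonal mu),
      Matrix.diagonal_mul_diagonal]
    rfl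
  have htr : trace (Mᵀ * M) = ∑ i, mu i * mu i := by
    rw [hMM, Matrix.trace_mul_cycle, hK, Matrix.one_mul, Matrix.trace_diagonal]
    simp
  have hsq : ∑ i, ∑ j, M i j ^ 2 = ∑ i, mu i * mu i := by
    have h2 : trace (Mᵀ * M) = ∑ i, ∑ j, M j i ^ 2 := by
      rw [Matrix.trace]
      simp [Matrix.diag, Matrix.mul_apply, Matrix.transpose_apply, sq]
    rw [← htr, h2, Finset.sum_comm]
  have hdiag : ∀ i, M i i = ∑ j, K i j ^ 2 * mu j := by
    intro i
    have h1 : M i i = ∑ x, (K * Matrix.diagonal mu) i x * K i x := by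
      simp [hMdef, Matrix.mul_apply, Matrix.transpose_apply]
    rw [h1]
    simp only [Matrix.mul_diagonal]
    exact Finset.sum_congr rfl fun x _ => by ring
  -- LHS as a single sum
  have hLHS : ∑ i, ∑ j, ((Matrix.diagonal mu - Matrix.diagonal lam) i j) ^ 2
      = ∑ i, (mu i - lam i) ^ 2 := by
    refine Finset.sum_congr rfl fun i _ => ?_
    rw [Finset.sum_eq_single i]
    · simp [Matrix.sub_apply, Matrix.diagonal_apply_eq]
    · intro j _ hj
      simp [Matrix.sub_apply, Matrix.diagonal_apply_ne _ (Ne.symm hj)]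
    · intro h; exact absurd (Finset.mem_univ i) h
  -- diagonal cross term
  have hcross : ∀ i : Fin n, ∑ j, M i j * Matrix.diagonal lam i j = M i i * lam i := by
    intro i
    rw [Finset.sum_eq_single i]
    · rw [Matrix.diagonal_apply_eq]
    · intro j _ hj
      rw [Matrix.diagonal_apply_ne _ (Ne.symm hj), mul_zero]
    · intro h; exact absurd (Finset.mem_univ i) h
  have hdsq : ∀ i : Fin n, ∑ j, (Matrix.diagonal lam i j) ^ 2 = lam i ^ 2 := by
    intro i
    rw [Finset.sum_eq_single i]
    · rw [Matrix.diagonal_apply_eq]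
    · intro j _ hj
      rw [Matrix.diagonal_apply_ne _ (Ne.symm hj)]; ring
    · intro h; exact absurd (Finset.mem_univ i) h
  have hRHS : ∑ i, ∑ j, ((M - Matrix.diagonal lam) i j) ^ 2
      = (∑ i, ∑ j, M i j ^ 2) - 2 * (∑ i, M i i * lam i) + ∑ i, lam i ^ 2 := by
    have step : ∀ i : Fin n, ∑ j, ((M - Matrix.diagonal lam) i j) ^ 2
        = (∑ j, M i j ^ 2) - 2 * (M i i * lam i) + lam i ^ 2 := by
      intro i
      have : ∀ j : Fin n, ((M - Matrix.diagonal lam) i j) ^ 2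
          = M i j ^ 2 - 2 * (M i j * Matrix.diagonal lam i j) + (Matrix.diagonal lam i j) ^ 2 := by
        intro j; rw [Matrix.sub_apply]; ring
      rw [Finset.sum_congr rfl fun j _ => this j, Finset.sum_add_distrib,
        Finset.sum_sub_distrib, ← Finset.mul_sum, hcross i, hdsq i]
    rw [Finset.sum_congr rfl fun i _ => step i, Finset.sum_add_distrib,
      Finset.sum_sub_distrib, ← Finset.mul_sum]
  -- key inequality
  have hkey : ∑ i, M i i * lam i ≤ ∑ i, lam i * mu i := by
    have h1 : ∑ i, M i i * lam i = ∑ i, ∑ j, (K i j ^ 2) * (lam i * mu j) := by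
      refine Finset.sum_congr rfl fun i _ => ?_
      rw [hdiag i, Finset.sum_mul]
      exact Finset.sum_congr rfl fun j _ => by ring
    rw [h1]
    exact key_s17 n lam mu hlamnn hlamsort hmunn hmusort (fun i j => K i j ^ 2)
      (fun i j => sq_nonneg _) hrow hcol
  have hexp : ∑ i, (mu i - lam i) ^ 2
      = (∑ i, mu i * mu i) - 2 * (∑ i, lam i * mu i) + ∑ i, lam i ^ 2 := by
    rw [Finset.mul_sum, ← Finset.sum_sub_distrib, ← Finset.sum_add_distrib]
    exact Finset.sum_congr rfl fun i _ => by ring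
  rw [hLHS, hexp, hRHS, hsq]
  linarith
end
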